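/- There exists a nonzero x ∈ [l, l+1) with T^n(x) = 0 for some n ∈ ℕ if and only if 1/β ∈ [l, l+1) or -1/β ∈ [l, l+1). -/
import Mathlib


noncomputable def negBetaT (β l x : ℝ) : ℝ := -β * x - ⌊-β * x - l⌋

lemma negBetaT_mem (β l x : ℝ) : negBetaT β l x ∈ Set.Ico l (l + 1) := by
  have h1 := Int.fract_nonneg (-β * x - l)
  have h2 := Int.fract_lt_one (-β * x - l)
  rw [Int.fract] at h1 h2
  have hfl : ⌊-β * x - l⌋ = ⌊-β * x - l⌋ := rfl
  constructor <;> simp only [negBetaT, Set.mem_Ico] <;> linarith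

lemma negBetaT_key (β l : ℝ) (hβ : 1 < β) (hl₁ : -1 < l) (hl₂ : l ≤ 0)
    (y : ℝ) (hy : y ∈ Set.Ico l (l + 1)) (hy0 : y ≠ 0) (hT : negBetaT β l y = 0) :
    1 / β ∈ Set.Ico l (l + 1) ∨ -1 / β ∈ Set.Ico l (l + 1) := by
  have hβ0 : (0:ℝ) < β := lt_trans one_pos hβ
  obtain ⟨hy1, hy2⟩ := hy
  set k : ℤ := ⌊-β * y - l⌋ with hk
  have hyk : β * y = -k := by
    have h : -β * y - (k:ℝ) = 0 := hT
    linarith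
  have hk0 : k ≠ 0 := by
    intro h
    apply hy0
    rw [h] at hyk
    have hby : β * y = 0 := by simpa using hyk
    rcases mul_eq_zero.mp hby with h' | h'
    · exact absurd h' (ne_of_gt hβ0)
    · exact h'
  rcases lt_or_gt_of_ne hk0 with h | h
  · -- k ≤ -1, so β*y = -k ≥ 1
    left
    have hk1 : (k:ℝ) ≤ -1 := by exact_mod_cast (by omega : k ≤ -1)
    have h1 : 1 ≤ β * y := by linarith
    have h2 : 1 / β ≤ y := by rw [div_le_iff₀ hβ0]; linarith
    have h3 : 0 < 1 / β := by positivity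
    exact ⟨by linarith, by linarith⟩
  · -- k ≥ 1, so β*y = -k ≤ -1
    right
    have hk1 : (1:ℝ) ≤ (k:ℝ) := by exact_mod_cast h
    have h1 : β * y ≤ -1 := by linarith
    have h2 : y ≤ -1 / β := by rw [le_div_iff₀ hβ0]; linarith
    have h3 : -1 / β < 0 := by
      have h4 : (0:ℝ) < 1 / β := by positivity
      rw [neg_div]; linarith
    exact ⟨by linarith, by linarith⟩

lemma negBetaT_forward (β l : ℝ) (hβ : 1 < β) (hl₁ : -1 < l) (hl₂ : l ≤ 0) :
    ∀ n : ℕ, ∀ x : ℝ, x ∈ Set.Ico l (l + 1) → x ≠ 0 → (negBetaT β l)^[n] x = 0 →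
      1 / β ∈ Set.Ico l (l + 1) ∨ -1 / β ∈ Set.Ico l (l + 1) := by
  intro n
  induction n with
  | zero => intro x hx hx0 h; simp at h; exact absurd h hx0
  | succ n ih =>
    intro x hx hx0 h
    by_cases hTx : negBetaT β l x = 0
    · exact negBetaT_key β l hβ hl₁ hl₂ x hx hx0 hTx
    · exact ih (negBetaT β l x) (negBetaT_mem β l x) hTx
        (by rwa [Function.iterate_succ_apply] at h)

theorem stmt_8 (β l : ℝ) (hβ : 1 < β) (hl₁ : -1 < l) (hl₂ : l ≤ 0) :
    (∃ x ∈ Set.Ico l (l + 1), x ≠ 0 ∧ ∃ n : ℕ, (negBetaT β l)^[n] x = 0) ↔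
      (1 / β ∈ Set.Ico l (l + 1) ∨ -1 / β ∈ Set.Ico l (l + 1)) := by
  have hβ0 : (0:ℝ) < β := lt_trans one_pos hβ
  constructor
  · rintro ⟨x, hx, hx0, n, hn⟩
    exact negBetaT_forward β l hβ hl₁ hl₂ n x hx hx0 hn
  · rintro (h | h)
    · refine ⟨1 / β, h, by positivity, 1, ?_⟩
      have h1 : -β * (1 / β) = -1 := by field_simp
      have hfl : ⌊(-1 : ℝ) - l⌋ = -1 := by
        rw [Int.floor_eq_iff]; constructor <;> push_cast <;> linarith
      simp only [Function.iterate_one, negBetaT, h1, hfl]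
      push_cast; ring
    · refine ⟨-1 / β, h, by
        have : (0:ℝ) < 1 / β := by positivity
        intro hc
        rw [neg_div] at hc
        simp only [neg_eq_zero] at hc
        linarith [hc ▸ this], 1, ?_⟩
      have h1 : -β * (-1 / β) = 1 := by field_simp
      have hfl : ⌊(1 : ℝ) - l⌋ = 1 := by
        rw [Int.floor_eq_iff]; constructor <;> push_cast <;> linarith
      simp only [Function.iterate_one, negBetaT, h1, hfl]
      push_cast; ring
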